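/- The 23 condensed configurations defining the present-color constraint ℰ_p form a maximal-complete collection: every maximal triple (S₁,S₂,S₃) of nonempty subsets of Λ_p satisfying the universal quantifier with respect to ℰ_p equals, up to permutation of the three components, one of these 23 condensed configurations viewed as a triple of sets. -/

import Mathlib

/-- A two-bit label: the first component is the input bit, the second the output bit. -/
abbrev TwoBit := Bool × Bool

def b00 : TwoBit := (false, false)
def b01 : TwoBit := (false, true)
def b10 : TwoBit := (true, false)
def b11 : TwoBit := (true, true)

/-- The 22 maximal bit triples. -/
def bitTriples : List (Fin 3 → Set TwoBit) :=
  [ ![{b00, b10, b11}, {b00}, {b00}],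
    ![{b01, b10, b11}, {b00}, {b01}],
    ![{b00, b10, b11}, {b01}, {b01}],
    ![{b00, b01, b11}, {b00}, {b10}],
    ![{b00, b01, b10}, {b00}, {b11}],
    ![{b00, b01, b10}, {b01}, {b10}],
    ![{b00, b01, b11}, {b01}, {b11}],
    ![{b01, b10, b11}, {b10}, {b10}],
    ![{b00, b10, b11}, {b10}, {b11}],
    ![{b01, b10, b11}, {b11}, {b11}],
    ![{b00, b10}, {b00}, {b00, b11}],
    ![{b01, b11}, {b00}, {b01, b10}],
    ![{b00, b10}, {b01}, {b01, b10}],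
    ![{b01, b11}, {b00, b11}, {b01}],
    ![{b00, b10}, {b01, b11}, {b10}],
    ![{b11}, {b00, b10}, {b00, b10}],
    ![{b10}, {b01, b10}, {b01, b10}],
    ![{b10}, {b00, b11}, {b00, b11}],
    ![{b00, b11}, {b01, b10}, {b11}],
    ![{b11}, {b01, b11}, {b01, b11}],
    ![{b10, b11}, {b00, b01}, {b00, b01}],
    ![{b10, b11}, {b10, b11}, {b10, b11}] ]

/-- The ten present-color labels Λ_p = {EE, MM, MY0, MY1, XM0, XM1, XY00, XY01, XY10, XY11}. -/
inductive Lab where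
  | EE : Lab
  | MM : Lab
  | MY : Bool → Lab
  | XM : Bool → Lab
  | XY : Bool → Bool → Lab
deriving DecidableEq

open Lab

/-- Augmentation of a set of two-bit labels: replace each two-bit label `xy` by `XY x y`;
add `XM x` if both `XY x 0` and `XY x 1` are present; add `MY y` if both `XY 0 y` and
`XY 1 y` are present; and always add `MM`. -/
def aug (T : Set TwoBit) : Set Lab :=
  {MM} ∪ {l | ∃ x y, (x, y) ∈ T ∧ l = XY x y}
    ∪ {l | ∃ x, (x, false) ∈ T ∧ (x, true) ∈ T ∧ l = XM x}
    ∪ {l | ∃ y, (false, y) ∈ T ∧ (true, y) ∈ T ∧ l = MY y}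

/-- The 23 condensed configurations defining the present-color constraint. -/
def condP : List (Fin 3 → Set Lab) :=
  bitTriples.map (fun T => fun j => aug (T j)) ++ [![{MM}, Set.univ, Set.univ]]

/-- The present-color constraint ℰ_p: the family of size-3 multisets represented by the
23 condensed configurations. -/
def Ep : Set (Multiset Lab) :=
  {C | ∃ D ∈ condP, ∃ l₁ ∈ D 0, ∃ l₂ ∈ D 1, ∃ l₃ ∈ D 2,
    C = ({l₁, l₂, l₃} : Multiset Lab)}

/-- A triple of sets of labels satisfies the universal quantifier w.r.t. ℰ_p if every
choice of one label per component yields a multiset in ℰ_p. -/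
def EpUQ (S : Fin 3 → Set Lab) : Prop :=
  ∀ l₁ ∈ S 0, ∀ l₂ ∈ S 1, ∀ l₃ ∈ S 2, ({l₁, l₂, l₃} : Multiset Lab) ∈ Ep

/-! ### Auxiliary machinery -/

section MultisetPerm
variable {α : Type*}

lemma ms_eq_coe (a b c : α) : ({a,b,c} : Multiset α) = (([a,b,c] : List α) : Multiset α) := rfl

lemma ms_swap12 (a b c : α) : ({a,b,c} : Multiset α) = {b,a,c} :=
  Quot.sound (List.Perm.swap b a _)

lemma ms_swap23 (a b c : α) : ({a,b,c} : Multiset α) = {a,c,b} :=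
  Quot.sound (List.Perm.cons a (List.Perm.swap c b _))

lemma ms_rot (a b c : α) : ({a,b,c} : Multiset α) = {b,c,a} :=
  ((ms_swap12 a b c)).trans (ms_swap23 b a c)

lemma perm2_cases {y z b c : α} (h : [y,z].Perm [b,c]) :
    (y = b ∧ z = c) ∨ (y = c ∧ z = b) := by
  have hy : y ∈ [b,c] := h.mem_iff.mp (by simp)
  simp only [List.mem_cons, List.mem_singleton, List.not_mem_nil, or_false] at hy
  rcases hy with hy | hy
  · subst hy
    left
    have h2 := List.perm_singleton.mp h.cons_inv
    simp at h2
    exact ⟨rfl, h2⟩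
  · subst hy
    right
    have h2 : [y,z].Perm [y,b] := h.trans (List.Perm.swap y b [])
    have h3 := List.perm_singleton.mp h2.cons_inv
    simp at h3
    exact ⟨rfl, h3⟩

lemma ms3_cases {x y z a b c : α} (h : ({x,y,z} : Multiset α) = {a,b,c}) :
    (x = a ∧ y = b ∧ z = c) ∨ (x = a ∧ y = c ∧ z = b) ∨
    (x = b ∧ y = a ∧ z = c) ∨ (x = b ∧ y = c ∧ z = a) ∨
    (x = c ∧ y = a ∧ z = b) ∨ (x = c ∧ y = b ∧ z = a) := by
  rw [ms_eq_coe, ms_eq_coe, Multiset.coe_eq_coe] at h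
  have hx : x ∈ [a,b,c] := h.mem_iff.mp (by simp)
  simp only [List.mem_cons, List.mem_singleton, List.not_mem_nil, or_false] at hx
  rcases hx with hx | hx | hx
  · subst hx
    rcases perm2_cases h.cons_inv with ⟨h1,h2⟩ | ⟨h1,h2⟩
    · exact Or.inl ⟨rfl, h1, h2⟩
    · exact Or.inr (Or.inl ⟨rfl, h1, h2⟩)
  · subst hx
    have h2 : [x,y,z].Perm [x,a,c] := h.trans (List.Perm.swap x a [c])
    rcases perm2_cases h2.cons_inv with ⟨h1,h3⟩ | ⟨h1,h3⟩
    · exact Or.inr (Or.inr (Or.inl ⟨rfl, h1, h3⟩))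
    · exact Or.inr (Or.inr (Or.inr (Or.inl ⟨rfl, h1, h3⟩)))
  · subst hx
    have h2 : [x,y,z].Perm [x,a,b] :=
      h.trans ((List.Perm.cons a (List.Perm.swap x b [])).trans (List.Perm.swap x a [b]))
    rcases perm2_cases h2.cons_inv with ⟨h1,h3⟩ | ⟨h1,h3⟩
    · exact Or.inr (Or.inr (Or.inr (Or.inr (Or.inl ⟨rfl, h1, h3⟩))))
    · exact Or.inr (Or.inr (Or.inr (Or.inr (Or.inr ⟨rfl, h1, h3⟩))))

end MultisetPerm

lemma forall₂_mem_left {α β : Type*} {R : α → β → Prop} :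
    ∀ {l1 : List α} {l2 : List β}, List.Forall₂ R l1 l2 → ∀ {a}, a ∈ l1 → ∃ b ∈ l2, R a b := by
  intro l1 l2 h
  induction h with
  | nil => intro a ha; simp at ha
  | cons hR _ ih =>
    intro a ha
    rcases List.mem_cons.mp ha with rfl | ha
    · exact ⟨_, List.mem_cons_self, hR⟩
    · obtain ⟨b, hb, hRb⟩ := ih ha
      exact ⟨b, List.mem_cons_of_mem _ hb, hRb⟩

lemma forall₂_mem_right {α β : Type*} {R : α → β → Prop} :
    ∀ {l1 : List α} {l2 : List β}, List.Forall₂ R l1 l2 → ∀ {b}, b ∈ l2 → ∃ a ∈ l1, R a b := by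
  intro l1 l2 h
  induction h with
  | nil => intro b hb; simp at hb
  | cons hR _ ih =>
    intro b hb
    rcases List.mem_cons.mp hb with rfl | hb
    · exact ⟨_, List.mem_cons_self, hR⟩
    · obtain ⟨a, ha, hRa⟩ := ih hb
      exact ⟨a, List.mem_cons_of_mem _ ha, hRa⟩

/-! ### Decidability instances and Fintype for Lab -/

instance insDec {α} [DecidableEq α] (a : α) (s : Set α) [DecidablePred (· ∈ s)] :
    DecidablePred (· ∈ insert a s) := fun x =>
  decidable_of_iff (x = a ∨ x ∈ s) (Set.mem_insert_iff).symm

instance singDec {α} [DecidableEq α] (a : α) :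
    DecidablePred (· ∈ ({a} : Set α)) := fun x =>
  decidable_of_iff (x = a) (Set.mem_singleton_iff).symm

instance augDec (T : Set TwoBit) [DecidablePred (· ∈ T)] :
    DecidablePred (· ∈ aug T) := fun l => by
  unfold aug
  have : Decidable (l ∈ ({Lab.MM} : Set Lab) ∪ {l | ∃ x y, (x, y) ∈ T ∧ l = Lab.XY x y}
      ∪ {l | ∃ x, (x, false) ∈ T ∧ (x, true) ∈ T ∧ l = Lab.XM x}) := by
    infer_instance
  infer_instance

open Lab

def labs : List Lab := [EE, MM, MY false, MY true, XM false, XM true,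
  XY false false, XY false true, XY true false, XY true true]

instance : Fintype Lab := ⟨⟨labs, by decide⟩, by
  intro x
  cases x with
  | EE => decide
  | MM => decide
  | MY y => cases y <;> decide
  | XM x => cases x <;> decide
  | XY x y => cases x <;> cases y <;> decide⟩

def bitn (b : Bool) : Nat := cond b 1 0

def idx : Lab → Nat
  | EE => 0 | MM => 1 | MY y => 2 + bitn y | XM x => 4 + bitn x
  | XY x y => 6 + 2 * bitn x + bitn y

def labOf (n : Nat) : Lab := labs.getD n EE

lemma idx_lt : ∀ l : Lab, idx l < 10 := by decide
lemma idx_labOf : ∀ n < 10, idx (labOf n) = n := by decide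

/-! ### Mask-level machinery -/

def ALLOW : Nat := 9824083825525934875170671445250743594225697794706498627930141769020555184905824556111325889251773089700284503916121062794459427026450956612006657470281755256994707046496259513004371245791948485117147807085352223857580009048433803576524466037990546332362954151291038218179368216814965634715509203139586

def allowN (b c : Nat) : Nat := (ALLOW >>> (10*(10*b+c))) &&& 1023

def perms3 {α : Type} (a b c : α) : List (α × α × α) :=
  [(a,b,c),(a,c,b),(b,a,c),(b,c,a),(c,a,b),(c,b,a)]

def cfgM : List (Nat × Nat × Nat) :=
  [(870, 66, 66), (938, 66, 130), (870, 130, 130), (730, 66, 258), (470, 66, 514),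
   (470, 130, 258), (730, 130, 514), (938, 258, 258), (870, 258, 514), (938, 514, 514),
   (326, 66, 578), (650, 66, 386), (326, 130, 386), (650, 578, 130), (326, 650, 258),
   (514, 326, 326), (258, 386, 386), (258, 578, 578), (578, 386, 514), (514, 650, 650),
   (802, 210, 210), (802, 802, 802), (2, 1023, 1023)]

def okSpec (a b c : Lab) : Bool :=
  cfgM.any fun t => (perms3 a b c).any fun p =>
    t.1.testBit (idx p.1) && t.2.1.testBit (idx p.2.1) && t.2.2.testBit (idx p.2.2)

lemma okSpec_eq_allow : ∀ a b c : Lab,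
    okSpec a b c = (allowN (idx b) (idx c)).testBit (idx a) := by decide

lemma eeMM : ∀ b c : Lab, okSpec EE b c = true → b = MM ∨ c = MM := by decide

def extGo (m1 m2 : Nat) : Nat → Nat → Nat
  | 0, acc => acc
  | k+1, acc => extGo m1 m2 k
      (if m1.testBit (k/10) && m2.testBit (k%10) then acc &&& allowN (k/10) (k%10) else acc)

def extN (m1 m2 : Nat) : Nat := extGo m1 m2 100 1023

def cfgL : List Nat := [2, 66, 130, 210, 258, 326, 386, 470, 514, 578, 650, 730, 802, 870, 938, 1023]

def cfgMperm : List (Nat × Nat × Nat) :=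
  (cfgM.take 22).flatMap fun t => perms3 t.1 t.2.1 t.2.2

def goodN (m0 m1 m2 : Nat) : Bool :=
  cfgMperm.any fun t => t.1 == m0 && t.2.1 == m1 && t.2.2 == m2

def chkPair (m1 m2 : Nat) : Bool :=
  !((m1 &&& 3) == 2) || !((m2 &&& 3) == 2) ||
  !(((extN m1 m2) &&& 3) == 2) ||
  !(m1 == extN (extN m1 m2) m2) || !(m2 == extN (extN m1 m2) m1) ||
  goodN (extN m1 m2) m1 m2

lemma cfgL_closed : ∀ p ∈ cfgL, ∀ k < 100, (p &&& allowN (k/10) (k%10)) ∈ cfgL := by decide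

lemma core' : ∀ p ∈ cfgL, ∀ q ∈ cfgL, chkPair p q = true := by decide

/-! ### extGo/extN lemmas -/

lemma extGo_le (m1 m2 : Nat) : ∀ (K acc : Nat), extGo m1 m2 K acc ≤ acc := by
  intro K
  induction K with
  | zero => intro acc; exact Nat.le_refl _
  | succ k ih =>
    intro acc
    show extGo m1 m2 k _ ≤ acc
    refine (ih _).trans ?_
    split
    · exact Nat.and_le_left
    · exact Nat.le_refl _

lemma extN_lt (m1 m2 : Nat) : extN m1 m2 < 1024 :=
  Nat.lt_succ_of_le (extGo_le m1 m2 100 1023)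

lemma extGo_mem (m1 m2 : Nat) : ∀ (K : Nat), K ≤ 100 → ∀ acc ∈ cfgL, extGo m1 m2 K acc ∈ cfgL := by
  intro K
  induction K with
  | zero => intro _ acc h; exact h
  | succ k ih =>
    intro hk acc hacc
    show extGo m1 m2 k _ ∈ cfgL
    refine ih (by omega) _ ?_
    split
    · exact cfgL_closed acc hacc k (by omega)
    · exact hacc

lemma extN_mem (m1 m2 : Nat) : extN m1 m2 ∈ cfgL :=
  extGo_mem m1 m2 100 (le_refl _) 1023 (by decide)

lemma forall_lt_succ' {P : Nat → Prop} (K : Nat) :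
    (∀ k < K+1, P k) ↔ (∀ k < K, P k) ∧ P K :=
  ⟨fun h => ⟨fun k hk => h k (by omega), h K (by omega)⟩,
   fun ⟨h1,h2⟩ k hk => by rcases Nat.lt_succ_iff_lt_or_eq.mp hk with h|h
                          exacts [h1 k h, h ▸ h2]⟩

lemma extGo_testBit (m1 m2 a : Nat) : ∀ (K acc : Nat),
    ((extGo m1 m2 K acc).testBit a = true ↔
      (acc.testBit a = true ∧ ∀ k < K, m1.testBit (k/10) = true → m2.testBit (k%10) = true →
        (allowN (k/10) (k%10)).testBit a = true)) := by
  intro K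
  induction K with
  | zero =>
    intro acc
    simp only [extGo]
    exact ⟨fun h => ⟨h, fun k hk => absurd hk (Nat.not_lt_zero k)⟩, fun h => h.1⟩
  | succ k ih =>
    intro acc
    simp only [extGo]
    rw [ih, forall_lt_succ']
    by_cases hb : (m1.testBit (k/10) && m2.testBit (k%10)) = true
    · rw [if_pos hb, Nat.testBit_land]
      simp only [Bool.and_eq_true] at hb
      obtain ⟨hb1, hb2⟩ := hb
      simp only [Bool.and_eq_true, hb1, hb2, true_implies]
      tauto
    · rw [if_neg hb]
      have hf : ¬(m1.testBit (k/10) = true ∧ m2.testBit (k%10) = true) := by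
        rintro ⟨x, y⟩
        exact hb (by rw [x, y]; rfl)
      constructor
      · rintro ⟨h1, h2⟩
        exact ⟨h1, h2, fun hm1 hm2 => absurd ⟨hm1, hm2⟩ hf⟩
      · rintro ⟨h1, h2, -⟩
        exact ⟨h1, h2⟩

lemma testBit_1023 {a : Nat} (ha : a < 10) : (1023 : Nat).testBit a = true := by
  interval_cases a <;> decide

lemma extN_testBit (m1 m2 a : Nat) (ha : a < 10) :
    ((extN m1 m2).testBit a = true ↔
      ∀ b c : Nat, b < 10 → c < 10 → m1.testBit b = true → m2.testBit c = true →
        (allowN b c).testBit a = true) := by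
  rw [extN, extGo_testBit]
  constructor
  · rintro ⟨-, h⟩ b c hbn hcn hb hc
    have hk : 10*b+c < 100 := by omega
    have hdiv : (10*b+c)/10 = b := by omega
    have hmod : (10*b+c)%10 = c := by omega
    have := h (10*b+c) hk
    rw [hdiv, hmod] at this
    exact this hb hc
  · intro h
    refine ⟨testBit_1023 ha, ?_⟩
    intro k hk hb hc
    exact h (k/10) (k%10) (by omega) (by omega) hb hc

lemma bool_eq_of_iff {a b : Bool} (h : a = true ↔ b = true) : a = b := by
  cases a <;> cases b <;> simp_all

lemma testBit_false_of_ge {m i : Nat} (hm : m < 1024) (hi : 10 ≤ i) : m.testBit i = false := by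
  apply Nat.testBit_lt_two_pow
  calc m < 1024 := hm
    _ = 2^10 := by norm_num
    _ ≤ 2^i := Nat.pow_le_pow_right (by norm_num) hi

lemma mask_ext {m m' : Nat} (hm : m < 1024) (hm' : m' < 1024)
    (h : ∀ l : Lab, m.testBit (idx l) = m'.testBit (idx l)) : m = m' := by
  apply Nat.eq_of_testBit_eq
  intro i
  by_cases hi : i < 10
  · have := h (labOf i)
    rwa [idx_labOf i hi] at this
  · rw [testBit_false_of_ge hm (by omega), testBit_false_of_ge hm' (by omega)]

lemma land3_eq {m : Nat} (h0 : m.testBit 0 = false) (h1 : m.testBit 1 = true) :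
    m &&& 3 = 2 := by
  apply Nat.eq_of_testBit_eq
  intro i
  match i with
  | 0 => rw [Nat.testBit_land, h0]; rfl
  | 1 => rw [Nat.testBit_land, h1]; rfl
  | (i+2) =>
    rw [Nat.testBit_land]
    have h3 : (3 : Nat).testBit (i+2) = false := by
      apply Nat.testBit_lt_two_pow
      calc (3:Nat) < 4 := by norm_num
        _ = 2^2 := by norm_num
        _ ≤ 2^(i+2) := Nat.pow_le_pow_right (by norm_num) (by omega)
    have h2 : (2 : Nat).testBit (i+2) = false := by
      apply Nat.testBit_lt_two_pow
      calc (2:Nat) < 4 := by norm_num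
        _ = 2^2 := by norm_num
        _ ≤ 2^(i+2) := Nat.pow_le_pow_right (by norm_num) (by omega)
    rw [h3, h2, Bool.and_false]

/-! ### Mask construction -/

def mk10 (a0 a1 a2 a3 a4 a5 a6 a7 a8 a9 : Bool) : Nat :=
  bitn a0 + 2 * bitn a1 + 4 * bitn a2 + 8 * bitn a3 + 16 * bitn a4 + 32 * bitn a5 +
    64 * bitn a6 + 128 * bitn a7 + 256 * bitn a8 + 512 * bitn a9

def sel (l : Lab) (a0 a1 a2 a3 a4 a5 a6 a7 a8 a9 : Bool) : Bool :=
  match l with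
  | EE => a0 | MM => a1
  | MY false => a2 | MY true => a3
  | XM false => a4 | XM true => a5
  | XY false false => a6 | XY false true => a7
  | XY true false => a8 | XY true true => a9

lemma mk10_lt : ∀ a0 a1 a2 a3 a4 a5 a6 a7 a8 a9 : Bool,
    mk10 a0 a1 a2 a3 a4 a5 a6 a7 a8 a9 < 1024 := by decide

lemma mk10_testBit : ∀ a0 a1 a2 a3 a4 a5 a6 a7 a8 a9 : Bool, ∀ l : Lab,
    (mk10 a0 a1 a2 a3 a4 a5 a6 a7 a8 a9).testBit (idx l) =
      sel l a0 a1 a2 a3 a4 a5 a6 a7 a8 a9 := by decide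

lemma exists_mask (A : Set Lab) :
    ∃ m : Nat, m < 1024 ∧ ∀ l : Lab, l ∈ A ↔ m.testBit (idx l) = true := by
  classical
  refine ⟨mk10 (decide (EE ∈ A)) (decide (MM ∈ A)) (decide (MY false ∈ A)) (decide (MY true ∈ A))
    (decide (XM false ∈ A)) (decide (XM true ∈ A)) (decide (XY false false ∈ A))
    (decide (XY false true ∈ A)) (decide (XY true false ∈ A)) (decide (XY true true ∈ A)),
    mk10_lt _ _ _ _ _ _ _ _ _ _, ?_⟩
  intro l
  rw [mk10_testBit]
  cases l with
  | EE => simp [sel]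
  | MM => simp [sel]
  | MY y => cases y <;> simp [sel]
  | XM x => cases x <;> simp [sel]
  | XY x y => cases x <;> cases y <;> simp [sel]

/-! ### Correspondence between condP and cfgM -/

def LabR (D : Fin 3 → Set Lab) (t : Nat × Nat × Nat) : Prop :=
  ∀ l : Lab, (l ∈ D 0 ↔ t.1.testBit (idx l) = true) ∧
    (l ∈ D 1 ↔ t.2.1.testBit (idx l) = true) ∧
    (l ∈ D 2 ↔ t.2.2.testBit (idx l) = true)

lemma CORR : List.Forall₂ LabR condP cfgM := by
  simp only [condP, bitTriples, List.map_cons, List.map_nil, List.cons_append, List.nil_append,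
    cfgM]
  refine .cons ?_ (.cons ?_ (.cons ?_ (.cons ?_ (.cons ?_ (.cons ?_ (.cons ?_ (.cons ?_
    (.cons ?_ (.cons ?_ (.cons ?_ (.cons ?_ (.cons ?_ (.cons ?_ (.cons ?_ (.cons ?_
    (.cons ?_ (.cons ?_ (.cons ?_ (.cons ?_ (.cons ?_ (.cons ?_ (.cons ?_ .nil)))))))))))))))))))))) <;>
  · intro l
    refine ⟨?_, ?_, ?_⟩ <;>
    · simp only [Matrix.cons_val_zero, Matrix.cons_val_one, Matrix.head_cons,
        Matrix.cons_val_two, Matrix.tail_cons]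
      revert l
      decide

/-! ### ok3 and its characterization -/

def ok3 (a b c : Lab) : Prop := ({a,b,c} : Multiset Lab) ∈ Ep

lemma ok3_def (a b c : Lab) : ok3 a b c ↔
    ∃ D ∈ condP, ∃ l₁ ∈ D 0, ∃ l₂ ∈ D 1, ∃ l₃ ∈ D 2,
      ({a,b,c} : Multiset Lab) = ({l₁, l₂, l₃} : Multiset Lab) := Iff.rfl

lemma ok3_swap12 (a b c : Lab) : ok3 a b c ↔ ok3 b a c := by
  unfold ok3; rw [ms_swap12]

lemma ok3_rot (a b c : Lab) : ok3 a b c ↔ ok3 b c a := by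
  unfold ok3; rw [ms_rot]

lemma mem_Ep_iff (a b c : Lab) : ok3 a b c ↔ okSpec a b c = true := by
  constructor
  · rw [ok3_def]
    rintro ⟨D, hD, l1, h1, l2, h2, l3, h3, heq⟩
    obtain ⟨t, ht, hR⟩ := forall₂_mem_left CORR hD
    have hm : (l1, l2, l3) ∈ perms3 a b c := by
      rcases ms3_cases heq.symm with ⟨e1,e2,e3⟩|⟨e1,e2,e3⟩|⟨e1,e2,e3⟩|⟨e1,e2,e3⟩|⟨e1,e2,e3⟩|⟨e1,e2,e3⟩ <;>
        (subst e1; subst e2; subst e3; simp [perms3])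
    refine List.any_eq_true.mpr ⟨t, ht, List.any_eq_true.mpr ⟨(l1, l2, l3), hm, ?_⟩⟩
    simp only [Bool.and_eq_true]
    exact ⟨⟨((hR l1).1).mp h1, ((hR l2).2.1).mp h2⟩, ((hR l3).2.2).mp h3⟩
  · intro h
    obtain ⟨t, ht, h2⟩ := List.any_eq_true.mp h
    obtain ⟨⟨p1, p2, p3⟩, hp, hb⟩ := List.any_eq_true.mp h2
    simp only [Bool.and_eq_true] at hb
    obtain ⟨⟨hb1, hb2⟩, hb3⟩ := hb
    obtain ⟨D, hD, hR⟩ := forall₂_mem_right CORR ht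
    rw [ok3_def]
    refine ⟨D, hD, p1, ((hR p1).1).mpr hb1, p2, ((hR p2).2.1).mpr hb2,
      p3, ((hR p3).2.2).mpr hb3, ?_⟩
    simp only [perms3, List.mem_cons, List.not_mem_nil, or_false, List.mem_singleton,
      Prod.mk.injEq] at hp
    rcases hp with ⟨rfl,rfl,rfl⟩|⟨rfl,rfl,rfl⟩|⟨rfl,rfl,rfl⟩|⟨rfl,rfl,rfl⟩|⟨rfl,rfl,rfl⟩|⟨rfl,rfl,rfl⟩
    · rfl
    · exact ms_swap23 _ _ _
    · exact ms_swap12 _ _ _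
    · exact ms_rot _ _ _
    · exact (ms_rot _ _ _).trans (ms_rot _ _ _)
    · exact (ms_rot _ _ _).trans (ms_swap12 _ _ _)

lemma okMM (a b : Lab) : ok3 MM a b := by
  rw [ok3_def]
  refine ⟨![{MM}, Set.univ, Set.univ], ?_, MM, ?_, a, ?_, b, ?_, rfl⟩
  · simp [condP]
  · simp
  · simp
  · simp

lemma ee3 {b c : Lab} (h : ok3 EE b c) : b = MM ∨ c = MM :=
  eeMM b c ((mem_Ep_iff EE b c).mp h)

lemma extN_sem {B C : Set Lab} {mB mC : Nat}
    (hB : ∀ l : Lab, l ∈ B ↔ mB.testBit (idx l) = true)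
    (hC : ∀ l : Lab, l ∈ C ↔ mC.testBit (idx l) = true) (a : Lab) :
    (extN mB mC).testBit (idx a) = true ↔ ∀ b ∈ B, ∀ c ∈ C, ok3 a b c := by
  rw [extN_testBit _ _ _ (idx_lt a)]
  constructor
  · intro h b hb c hc
    rw [mem_Ep_iff, okSpec_eq_allow]
    exact h (idx b) (idx c) (idx_lt b) (idx_lt c) ((hB b).mp hb) ((hC c).mp hc)
  · intro h b c hbn hcn hb hc
    have hb' : labOf b ∈ B := (hB _).mpr (by rw [idx_labOf b hbn]; exact hb)
    have hc' : labOf c ∈ C := (hC _).mpr (by rw [idx_labOf c hcn]; exact hc)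
    have := h _ hb' _ hc'
    rw [mem_Ep_iff, okSpec_eq_allow, idx_labOf b hbn, idx_labOf c hcn] at this
    exact this

lemma setEq {A X : Set Lab} {mA : Nat}
    (h1 : ∀ l : Lab, l ∈ A ↔ mA.testBit (idx l) = true)
    (h2 : ∀ l : Lab, l ∈ X ↔ mA.testBit (idx l) = true) : A = X :=
  Set.ext fun l => (h1 l).trans (h2 l).symm

/-- **The 23 condensed configurations defining ℰ_p form a maximal-complete collection**:
every maximal triple of nonempty subsets of Λ_p satisfying the universal quantifier
w.r.t. ℰ_p equals, up to permutation of the three components, one of the 23 condensed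
configurations viewed as a triple of sets. -/
theorem present_color_maximal_complete (S : Fin 3 → Set Lab)
    (hne : ∀ j, (S j).Nonempty)
    (hUQ : EpUQ S)
    (hmax : ¬ ∃ S' : Fin 3 → Set Lab,
        EpUQ S' ∧ (∀ j, S j ⊆ S' j) ∧ (∃ j, S j ⊂ S' j)) :
    ∃ ρ : Equiv.Perm (Fin 3), ∃ D ∈ condP, ∀ j, S (ρ j) = D j := by
  classical
  have hmaxEq : ∀ S' : Fin 3 → Set Lab, EpUQ S' → (∀ j, S j ⊆ S' j) → ∀ j, S j = S' j := by
    intro S' h1 h2 j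
    by_contra hne'
    exact hmax ⟨S', h1, h2, j, (h2 j).ssubset_of_ne hne'⟩
  have closed0 : ∀ a : Lab, a ∈ S 0 ↔ ∀ b ∈ S 1, ∀ c ∈ S 2, ok3 a b c := by
    intro a
    constructor
    · intro ha b hb c hc; exact hUQ a ha b hb c hc
    · intro hcomp
      have hUQ' : EpUQ (fun i : Fin 3 => if i = 0 then insert a (S 0) else S i) := by
        intro l1 h1 l2 h2 l3 h3
        have h1' : l1 ∈ insert a (S 0) := by simpa using h1
        have h2' : l2 ∈ S 1 := by simpa using h2
        have h3' : l3 ∈ S 2 := by simpa using h3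
        rcases h1' with rfl | h1'
        · exact hcomp l2 h2' l3 h3'
        · exact hUQ l1 h1' l2 h2' l3 h3'
      have hsub : ∀ j, S j ⊆ (fun i : Fin 3 => if i = 0 then insert a (S 0) else S i) j := by
        intro j x hx
        by_cases hj : j = 0
        · subst hj; simp only [if_pos rfl]; exact Set.mem_insert_of_mem _ hx
        · simp only [if_neg hj]; exact hx
      have := hmaxEq _ hUQ' hsub 0
      simp only [if_pos rfl] at this
      rw [this]
      exact Set.mem_insert _ _
  have closed1 : ∀ a : Lab, a ∈ S 1 ↔ ∀ b ∈ S 0, ∀ c ∈ S 2, ok3 a b c := by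
    intro a
    constructor
    · intro ha b hb c hc; exact (ok3_swap12 a b c).mpr (hUQ b hb a ha c hc)
    · intro hcomp
      have hUQ' : EpUQ (fun i : Fin 3 => if i = 1 then insert a (S 1) else S i) := by
        intro l1 h1 l2 h2 l3 h3
        have h1' : l1 ∈ S 0 := by simpa using h1
        have h2' : l2 ∈ insert a (S 1) := by simpa using h2
        have h3' : l3 ∈ S 2 := by simpa using h3
        rcases h2' with rfl | h2'
        · exact (ok3_swap12 l2 l1 l3).mp (hcomp l1 h1' l3 h3')
        · exact hUQ l1 h1' l2 h2' l3 h3'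
      have hsub : ∀ j, S j ⊆ (fun i : Fin 3 => if i = 1 then insert a (S 1) else S i) j := by
        intro j x hx
        by_cases hj : j = 1
        · subst hj; simp only [if_pos rfl]; exact Set.mem_insert_of_mem _ hx
        · simp only [if_neg hj]; exact hx
      have := hmaxEq _ hUQ' hsub 1
      simp only [if_pos rfl] at this
      rw [this]
      exact Set.mem_insert _ _
  have closed2 : ∀ a : Lab, a ∈ S 2 ↔ ∀ b ∈ S 0, ∀ c ∈ S 1, ok3 a b c := by
    intro a
    constructor
    · intro ha b hb c hc; exact (ok3_rot a b c).mpr (hUQ b hb c hc a ha)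
    · intro hcomp
      have hUQ' : EpUQ (fun i : Fin 3 => if i = 2 then insert a (S 2) else S i) := by
        intro l1 h1 l2 h2 l3 h3
        have h1' : l1 ∈ S 0 := by simpa using h1
        have h2' : l2 ∈ S 1 := by simpa using h2
        have h3' : l3 ∈ insert a (S 2) := by simpa using h3
        rcases h3' with rfl | h3'
        · exact (ok3_rot l3 l1 l2).mp (hcomp l1 h1' l2 h2')
        · exact hUQ l1 h1' l2 h2' l3 h3'
      have hsub : ∀ j, S j ⊆ (fun i : Fin 3 => if i = 2 then insert a (S 2) else S i) j := by
        intro j x hx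
        by_cases hj : j = 2
        · subst hj; simp only [if_pos rfl]; exact Set.mem_insert_of_mem _ hx
        · simp only [if_neg hj]; exact hx
      have := hmaxEq _ hUQ' hsub 2
      simp only [if_pos rfl] at this
      rw [this]
      exact Set.mem_insert _ _
  by_cases hEE : ∃ j, EE ∈ S j
  · -- EE case
    obtain ⟨j0, hj0⟩ := hEE
    have key : ∃ k1 k2 : Fin 3, ∀ b ∈ S k1, ∀ c ∈ S k2, b = MM ∨ c = MM := by
      fin_cases j0
      · exact ⟨1, 2, fun b hb c hc => ee3 (hUQ EE hj0 b hb c hc)⟩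
      · exact ⟨0, 2, fun b hb c hc => ee3 ((ok3_swap12 EE b c).mpr (hUQ b hb EE hj0 c hc))⟩
      · exact ⟨0, 1, fun b hb c hc => ee3 ((ok3_rot EE b c).mpr (hUQ b hb c hc EE hj0))⟩
    obtain ⟨k1, k2, hkey⟩ := key
    have hkex : ∃ k : Fin 3, ∀ x ∈ S k, x = MM := by
      by_cases hall : ∀ x ∈ S k1, x = MM
      · exact ⟨k1, hall⟩
      · push_neg at hall
        obtain ⟨b, hb, hbne⟩ := hall
        exact ⟨k2, fun c hc => (hkey b hb c hc).resolve_left hbne⟩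
    obtain ⟨k, hk⟩ := hkex
    have hDmem : (![{MM}, Set.univ, Set.univ] : Fin 3 → Set Lab) ∈ condP := by
      simp [condP]
    fin_cases k
    · have hUQ' : EpUQ (fun i : Fin 3 => if i = 0 then {MM} else Set.univ) := by
        intro l1 h1 l2 h2 l3 h3
        obtain rfl : l1 = MM := by simpa using h1
        exact okMM l2 l3
      have hsub : ∀ j, S j ⊆ (fun i : Fin 3 => if i = 0 then {MM} else Set.univ) j := by
        intro j x hx
        by_cases hj : j = 0
        · subst hj; simp only [if_pos rfl]; exact hk x hx
        · simp only [if_neg hj]; trivial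
      have heq := hmaxEq _ hUQ' hsub
      refine ⟨Equiv.refl _, _, hDmem, ?_⟩
      have e0 : S ((Equiv.refl (Fin 3)) 0) = (![{MM}, Set.univ, Set.univ] : Fin 3 → Set Lab) 0 := by
        rw [show ((Equiv.refl (Fin 3)) 0 : Fin 3) = 0 from rfl, heq 0]
        simp
      have e1 : S ((Equiv.refl (Fin 3)) 1) = (![{MM}, Set.univ, Set.univ] : Fin 3 → Set Lab) 1 := by
        rw [show ((Equiv.refl (Fin 3)) 1 : Fin 3) = 1 from rfl, heq 1]
        simp
      have e2 : S ((Equiv.refl (Fin 3)) 2) = (![{MM}, Set.univ, Set.univ] : Fin 3 → Set Lab) 2 := by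
        rw [show ((Equiv.refl (Fin 3)) 2 : Fin 3) = 2 from rfl, heq 2]
        simp
      intro j
      fin_cases j
      · exact e0
      · exact e1
      · exact e2
    · have hUQ' : EpUQ (fun i : Fin 3 => if i = 1 then {MM} else Set.univ) := by
        intro l1 h1 l2 h2 l3 h3
        obtain rfl : l2 = MM := by simpa using h2
        exact (ok3_swap12 MM l1 l3).mp (okMM l1 l3)
      have hsub : ∀ j, S j ⊆ (fun i : Fin 3 => if i = 1 then {MM} else Set.univ) j := by
        intro j x hx
        by_cases hj : j = 1
        · subst hj; simp only [if_pos rfl]; exact hk x hx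
        · simp only [if_neg hj]; trivial
      have heq := hmaxEq _ hUQ' hsub
      refine ⟨Equiv.swap 0 1, _, hDmem, ?_⟩
      have e0 : S ((Equiv.swap (0:Fin 3) 1) 0) = (![{MM}, Set.univ, Set.univ] : Fin 3 → Set Lab) 0 := by
        rw [show ((Equiv.swap (0:Fin 3) 1) 0 : Fin 3) = 1 from by decide, heq 1]
        simp
      have e1 : S ((Equiv.swap (0:Fin 3) 1) 1) = (![{MM}, Set.univ, Set.univ] : Fin 3 → Set Lab) 1 := by
        rw [show ((Equiv.swap (0:Fin 3) 1) 1 : Fin 3) = 0 from by decide, heq 0]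
        simp
      have e2 : S ((Equiv.swap (0:Fin 3) 1) 2) = (![{MM}, Set.univ, Set.univ] : Fin 3 → Set Lab) 2 := by
        rw [show ((Equiv.swap (0:Fin 3) 1) 2 : Fin 3) = 2 from by decide, heq 2]
        simp
      intro j
      fin_cases j
      · exact e0
      · exact e1
      · exact e2
    · have hUQ' : EpUQ (fun i : Fin 3 => if i = 2 then {MM} else Set.univ) := by
        intro l1 h1 l2 h2 l3 h3
        obtain rfl : l3 = MM := by simpa using h3
        exact (ok3_rot MM l1 l2).mp (okMM l1 l2)
      have hsub : ∀ j, S j ⊆ (fun i : Fin 3 => if i = 2 then {MM} else Set.univ) j := by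
        intro j x hx
        by_cases hj : j = 2
        · subst hj; simp only [if_pos rfl]; exact hk x hx
        · simp only [if_neg hj]; trivial
      have heq := hmaxEq _ hUQ' hsub
      refine ⟨Equiv.swap 0 2, _, hDmem, ?_⟩
      have e0 : S ((Equiv.swap (0:Fin 3) 2) 0) = (![{MM}, Set.univ, Set.univ] : Fin 3 → Set Lab) 0 := by
        rw [show ((Equiv.swap (0:Fin 3) 2) 0 : Fin 3) = 2 from by decide, heq 2]
        simp
      have e1 : S ((Equiv.swap (0:Fin 3) 2) 1) = (![{MM}, Set.univ, Set.univ] : Fin 3 → Set Lab) 1 := by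
        rw [show ((Equiv.swap (0:Fin 3) 2) 1 : Fin 3) = 1 from by decide, heq 1]
        simp
      have e2 : S ((Equiv.swap (0:Fin 3) 2) 2) = (![{MM}, Set.univ, Set.univ] : Fin 3 → Set Lab) 2 := by
        rw [show ((Equiv.swap (0:Fin 3) 2) 2 : Fin 3) = 0 from by decide, heq 0]
        simp
      intro j
      fin_cases j
      · exact e0
      · exact e1
      · exact e2
  · -- main case: no EE
    push_neg at hEE
    have hMM : ∀ j : Fin 3, MM ∈ S j := by
      intro j
      fin_cases j
      · exact (closed0 MM).mpr (fun b _ c _ => okMM b c)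
      · exact (closed1 MM).mpr (fun b _ c _ => okMM b c)
      · exact (closed2 MM).mpr (fun b _ c _ => okMM b c)
    obtain ⟨m0, hm0lt, hm0⟩ := exists_mask (S 0)
    obtain ⟨m1, hm1lt, hm1⟩ := exists_mask (S 1)
    obtain ⟨m2, hm2lt, hm2⟩ := exists_mask (S 2)
    have E0 : m0 = extN m1 m2 := mask_ext hm0lt (extN_lt _ _) (fun l =>
      bool_eq_of_iff ((hm0 l).symm.trans ((closed0 l).trans (extN_sem hm1 hm2 l).symm)))
    have E1 : m1 = extN m0 m2 := mask_ext hm1lt (extN_lt _ _) (fun l =>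
      bool_eq_of_iff ((hm1 l).symm.trans ((closed1 l).trans (extN_sem hm0 hm2 l).symm)))
    have E2 : m2 = extN m0 m1 := mask_ext hm2lt (extN_lt _ _) (fun l =>
      bool_eq_of_iff ((hm2 l).symm.trans ((closed2 l).trans (extN_sem hm0 hm1 l).symm)))
    have memL1 : m1 ∈ cfgL := by rw [E1]; exact extN_mem m0 m2
    have memL2 : m2 ∈ cfgL := by rw [E2]; exact extN_mem m0 m1
    have tEE : ∀ (j : Fin 3) (m : Nat), (∀ l : Lab, l ∈ S j ↔ m.testBit (idx l) = true) →
        m.testBit 0 = false := by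
      intro j m hm
      cases h : m.testBit 0
      · rfl
      · exact absurd ((hm EE).mpr (by rw [show idx EE = 0 from rfl]; exact h)) (hEE j)
    have tMM : ∀ (j : Fin 3) (m : Nat), (∀ l : Lab, l ∈ S j ↔ m.testBit (idx l) = true) →
        m.testBit 1 = true := by
      intro j m hm
      have := (hm MM).mp (hMM j)
      rwa [show idx MM = 1 from rfl] at this
    have g0 : m0 &&& 3 = 2 := land3_eq (tEE 0 m0 hm0) (tMM 0 m0 hm0)
    have g1 : m1 &&& 3 = 2 := land3_eq (tEE 1 m1 hm1) (tMM 1 m1 hm1)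
    have g2 : m2 &&& 3 = 2 := land3_eq (tEE 2 m2 hm2) (tMM 2 m2 hm2)
    have hchk := core' m1 memL1 m2 memL2
    rw [chkPair] at hchk
    rw [← E0, ← E1, ← E2, g0, g1, g2] at hchk
    simp only [beq_self_eq_true, Bool.not_true, Bool.false_or] at hchk
    obtain ⟨t, ht, hb⟩ := List.any_eq_true.mp hchk
    simp only [Bool.and_eq_true, beq_iff_eq] at hb
    obtain ⟨⟨hb0, hb1⟩, hb2⟩ := hb
    simp only [cfgMperm, List.mem_flatMap] at ht
    obtain ⟨base, hbase, hperm⟩ := ht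
    have hbase' : base ∈ cfgM := List.take_subset _ _ hbase
    obtain ⟨D, hD, hR⟩ := forall₂_mem_right CORR hbase'
    have bitIff : ∀ (x y : Nat), x = y → ∀ l : Lab,
        (x.testBit (idx l) = true ↔ y.testBit (idx l) = true) := by
      intro x y h l; rw [h]
    simp only [perms3, List.mem_cons, List.not_mem_nil, or_false, List.mem_singleton] at hperm
    rcases hperm with hp | hp | hp | hp | hp | hp <;> subst hp
    · -- t = (B1,B2,B3)
      have q0 : base.1 = m0 := hb0
      have q1 : base.2.1 = m1 := hb1
      have q2 : base.2.2 = m2 := hb2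
      refine ⟨Equiv.refl (Fin 3), D, hD, ?_⟩
      have e0 : S ((Equiv.refl (Fin 3)) 0) = D 0 := by
        rw [show ((Equiv.refl (Fin 3)) 0 : Fin 3) = 0 from rfl]
        exact setEq hm0 (fun l => ((hR l).1).trans (bitIff _ _ q0 l))
      have e1 : S ((Equiv.refl (Fin 3)) 1) = D 1 := by
        rw [show ((Equiv.refl (Fin 3)) 1 : Fin 3) = 1 from rfl]
        exact setEq hm1 (fun l => ((hR l).2.1).trans (bitIff _ _ q1 l))
      have e2 : S ((Equiv.refl (Fin 3)) 2) = D 2 := by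
        rw [show ((Equiv.refl (Fin 3)) 2 : Fin 3) = 2 from rfl]
        exact setEq hm2 (fun l => ((hR l).2.2).trans (bitIff _ _ q2 l))
      intro j
      fin_cases j
      · exact e0
      · exact e1
      · exact e2
    · -- t = (B1,B3,B2)
      have q0 : base.1 = m0 := hb0
      have q1 : base.2.1 = m2 := hb2
      have q2 : base.2.2 = m1 := hb1
      refine ⟨Equiv.swap (1:Fin 3) 2, D, hD, ?_⟩
      have e0 : S ((Equiv.swap (1:Fin 3) 2) 0) = D 0 := by
        rw [show ((Equiv.swap (1:Fin 3) 2) 0 : Fin 3) = 0 from by decide]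
        exact setEq hm0 (fun l => ((hR l).1).trans (bitIff _ _ q0 l))
      have e1 : S ((Equiv.swap (1:Fin 3) 2) 1) = D 1 := by
        rw [show ((Equiv.swap (1:Fin 3) 2) 1 : Fin 3) = 2 from by decide]
        exact setEq hm2 (fun l => ((hR l).2.1).trans (bitIff _ _ q1 l))
      have e2 : S ((Equiv.swap (1:Fin 3) 2) 2) = D 2 := by
        rw [show ((Equiv.swap (1:Fin 3) 2) 2 : Fin 3) = 1 from by decide]
        exact setEq hm1 (fun l => ((hR l).2.2).trans (bitIff _ _ q2 l))
      intro j
      fin_cases j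
      · exact e0
      · exact e1
      · exact e2
    · -- t = (B2,B1,B3)
      have q0 : base.1 = m1 := hb1
      have q1 : base.2.1 = m0 := hb0
      have q2 : base.2.2 = m2 := hb2
      refine ⟨Equiv.swap (0:Fin 3) 1, D, hD, ?_⟩
      have e0 : S ((Equiv.swap (0:Fin 3) 1) 0) = D 0 := by
        rw [show ((Equiv.swap (0:Fin 3) 1) 0 : Fin 3) = 1 from by decide]
        exact setEq hm1 (fun l => ((hR l).1).trans (bitIff _ _ q0 l))
      have e1 : S ((Equiv.swap (0:Fin 3) 1) 1) = D 1 := by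
        rw [show ((Equiv.swap (0:Fin 3) 1) 1 : Fin 3) = 0 from by decide]
        exact setEq hm0 (fun l => ((hR l).2.1).trans (bitIff _ _ q1 l))
      have e2 : S ((Equiv.swap (0:Fin 3) 1) 2) = D 2 := by
        rw [show ((Equiv.swap (0:Fin 3) 1) 2 : Fin 3) = 2 from by decide]
        exact setEq hm2 (fun l => ((hR l).2.2).trans (bitIff _ _ q2 l))
      intro j
      fin_cases j
      · exact e0
      · exact e1
      · exact e2
    · -- t = (B2,B3,B1)
      have q0 : base.1 = m2 := hb2
      have q1 : base.2.1 = m0 := hb0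
      have q2 : base.2.2 = m1 := hb1
      refine ⟨(Equiv.swap (0:Fin 3) 2).trans (Equiv.swap 0 1), D, hD, ?_⟩
      have e0 : S (((Equiv.swap (0:Fin 3) 2).trans (Equiv.swap 0 1)) 0) = D 0 := by
        rw [show (((Equiv.swap (0:Fin 3) 2).trans (Equiv.swap 0 1)) 0 : Fin 3) = 2 from by decide]
        exact setEq hm2 (fun l => ((hR l).1).trans (bitIff _ _ q0 l))
      have e1 : S (((Equiv.swap (0:Fin 3) 2).trans (Equiv.swap 0 1)) 1) = D 1 := by
        rw [show (((Equiv.swap (0:Fin 3) 2).trans (Equiv.swap 0 1)) 1 : Fin 3) = 0 from by decide]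
        exact setEq hm0 (fun l => ((hR l).2.1).trans (bitIff _ _ q1 l))
      have e2 : S (((Equiv.swap (0:Fin 3) 2).trans (Equiv.swap 0 1)) 2) = D 2 := by
        rw [show (((Equiv.swap (0:Fin 3) 2).trans (Equiv.swap 0 1)) 2 : Fin 3) = 1 from by decide]
        exact setEq hm1 (fun l => ((hR l).2.2).trans (bitIff _ _ q2 l))
      intro j
      fin_cases j
      · exact e0
      · exact e1
      · exact e2
    · -- t = (B3,B1,B2)
      have q0 : base.1 = m1 := hb1
      have q1 : base.2.1 = m2 := hb2
      have q2 : base.2.2 = m0 := hb0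
      refine ⟨(Equiv.swap (0:Fin 3) 1).trans (Equiv.swap 0 2), D, hD, ?_⟩
      have e0 : S (((Equiv.swap (0:Fin 3) 1).trans (Equiv.swap 0 2)) 0) = D 0 := by
        rw [show (((Equiv.swap (0:Fin 3) 1).trans (Equiv.swap 0 2)) 0 : Fin 3) = 1 from by decide]
        exact setEq hm1 (fun l => ((hR l).1).trans (bitIff _ _ q0 l))
      have e1 : S (((Equiv.swap (0:Fin 3) 1).trans (Equiv.swap 0 2)) 1) = D 1 := by
        rw [show (((Equiv.swap (0:Fin 3) 1).trans (Equiv.swap 0 2)) 1 : Fin 3) = 2 from by decide]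
        exact setEq hm2 (fun l => ((hR l).2.1).trans (bitIff _ _ q1 l))
      have e2 : S (((Equiv.swap (0:Fin 3) 1).trans (Equiv.swap 0 2)) 2) = D 2 := by
        rw [show (((Equiv.swap (0:Fin 3) 1).trans (Equiv.swap 0 2)) 2 : Fin 3) = 0 from by decide]
        exact setEq hm0 (fun l => ((hR l).2.2).trans (bitIff _ _ q2 l))
      intro j
      fin_cases j
      · exact e0
      · exact e1
      · exact e2
    · -- t = (B3,B2,B1)
      have q0 : base.1 = m2 := hb2
      have q1 : base.2.1 = m1 := hb1
      have q2 : base.2.2 = m0 := hb0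
      refine ⟨Equiv.swap (0:Fin 3) 2, D, hD, ?_⟩
      have e0 : S ((Equiv.swap (0:Fin 3) 2) 0) = D 0 := by
        rw [show ((Equiv.swap (0:Fin 3) 2) 0 : Fin 3) = 2 from by decide]
        exact setEq hm2 (fun l => ((hR l).1).trans (bitIff _ _ q0 l))
      have e1 : S ((Equiv.swap (0:Fin 3) 2) 1) = D 1 := by
        rw [show ((Equiv.swap (0:Fin 3) 2) 1 : Fin 3) = 1 from by decide]
        exact setEq hm1 (fun l => ((hR l).2.1).trans (bitIff _ _ q1 l))
      have e2 : S ((Equiv.swap (0:Fin 3) 2) 2) = D 2 := by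
        rw [show ((Equiv.swap (0:Fin 3) 2) 2 : Fin 3) = 0 from by decide]
        exact setEq hm0 (fun l => ((hR l).2.2).trans (bitIff _ _ q2 l))
      intro j
      fin_cases j
      · exact e0
      · exact e1
      · exact e2
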